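/- Let n be a positive integer, λ_1,…,λ_n positive reals, τ > 0, and f_1,…,f_n : ℝ → ℝ continuous, with f_j satisfying positive feedback for 1 ≤ j ≤ n−1 and f_n satisfying negative feedback. Let x = (x_1,…,x_n) be a solution of the cyclic system on [0,∞) and suppose for some index k and some T ≥ 0 the component x_k satisfies x_k(t) ≥ 0 for all t ≥ T (or x_k(t) ≤ 0 for all t ≥ T), and x_k is not eventually identically zero (for every s ≥ T there exists t ≥ s with x_k(t) ≠ 0). Then there exists T_1 > T such that |x_j(t)| > 0 for every t ≥ T_1 and every j = 1,…,n; in particular every component is eventually of a strict constant sign, so all components are non-oscillatory. -/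

import Mathlib

/-- A solution of the cyclic system with delay on `[T, ∞)` (0-indexed components
`x 0, …, x (n-1)`). -/
def IsCyclicSolution (n : ℕ) (lam : ℕ → ℝ) (τ : ℝ) (f : ℕ → ℝ → ℝ)
    (T : ℝ) (x : ℕ → ℝ → ℝ) : Prop :=
  ContinuousOn (x 0) (Set.Ici (T - τ)) ∧
  (∀ j < n, ContinuousOn (x j) (Set.Ici T)) ∧
  ∀ t : ℝ, T < t →
    (∀ j : ℕ, j + 1 < n →
      HasDerivAt (x j) (-lam j * x j t + f j (x (j + 1) t)) t) ∧
    HasDerivAt (x (n - 1)) (-lam (n - 1) * x (n - 1) t + f (n - 1) (x 0 (t - τ))) t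


/-- A continuous positive-feedback function vanishes at 0. -/
lemma feedback_zero (f : ℝ → ℝ) (hc : Continuous f) (h : ∀ y : ℝ, y ≠ 0 → 0 < y * f y) :
    f 0 = 0 := by
  by_contra hne
  rcases lt_or_gt_of_ne hne with h1 | h1
  · have h2 : f ⁻¹' (Set.Iio 0) ∈ nhds (0:ℝ) :=
      hc.continuousAt.preimage_mem_nhds (Iio_mem_nhds h1)
    obtain ⟨ε, hε, hball⟩ := Metric.mem_nhds_iff.mp h2
    have hmem : (ε/2) ∈ Metric.ball (0:ℝ) ε := by
      simp only [Metric.mem_ball, Real.dist_eq, sub_zero]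
      rw [abs_of_pos (by linarith : (0:ℝ) < ε/2)]; linarith
    have hf : f (ε/2) < 0 := hball hmem
    have := h (ε/2) (by positivity)
    nlinarith
  · have h2 : f ⁻¹' (Set.Ioi 0) ∈ nhds (0:ℝ) :=
      hc.continuousAt.preimage_mem_nhds (Ioi_mem_nhds h1)
    obtain ⟨ε, hε, hball⟩ := Metric.mem_nhds_iff.mp h2
    have hmem : (-(ε/2)) ∈ Metric.ball (0:ℝ) ε := by
      simp only [Metric.mem_ball, Real.dist_eq, sub_zero]
      rw [abs_of_neg (by linarith : (-(ε/2):ℝ) < 0)]; linarith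
    have hf : 0 < f (-(ε/2)) := hball hmem
    have := h (-(ε/2)) (by intro hh; nlinarith)
    nlinarith

/-- Key ODE lemma: if `y' = -λ y + F` with `F ≥ 0` and `F > 0` at unboundedly many
times, then `y` eventually has a strict constant sign. -/
lemma key_pos (lam : ℝ) (y F : ℝ → ℝ) (S : ℝ)
    (hy : ContinuousOn y (Set.Ici S))
    (hder : ∀ t, S < t → HasDerivAt y (-lam * y t + F t) t)
    (hF : ∀ t, S ≤ t → 0 ≤ F t)
    (hFnz : ∀ s, S ≤ s → ∃ t, s ≤ t ∧ 0 < F t) :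
    ∃ S₁, S < S₁ ∧ ((∀ t, S₁ ≤ t → 0 < y t) ∨ (∀ t, S₁ ≤ t → y t < 0)) := by
  set g : ℝ → ℝ := fun t => Real.exp (lam * t) * y t with hg
  have hgder : ∀ t, S < t → HasDerivAt g (Real.exp (lam * t) * F t) t := by
    intro t ht
    have h1 : HasDerivAt (fun u : ℝ => Real.exp (lam * u)) (Real.exp (lam * t) * (lam * 1)) t :=
      ((hasDerivAt_id t).const_mul lam).exp
    have h2 := h1.mul (hder t ht)
    exact h2.congr_deriv (by ring)
  have hgc : ContinuousOn g (Set.Ici S) :=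
    ((Real.continuous_exp.comp (continuous_const.mul continuous_id)).continuousOn).mul hy
  have hmono : MonotoneOn g (Set.Ici S) := by
    apply monotoneOn_of_deriv_nonneg (convex_Ici S) hgc
    · intro t ht
      rw [interior_Ici] at ht
      exact ((hgder t ht).differentiableAt).differentiableWithinAt
    · intro t ht
      rw [interior_Ici] at ht
      rw [(hgder t ht).deriv]
      exact mul_nonneg (Real.exp_pos _).le (hF t ht.le)
  by_cases hc : ∀ t, S ≤ t → g t ≤ 0
  · refine ⟨S + 1, by linarith, Or.inr ?_⟩
    intro t ht
    have hSt : S ≤ t := by linarith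
    have hgt : g t < 0 := by
      rcases lt_or_eq_of_le (hc t hSt) with h | h
      · exact h
      exfalso
      have hzero : ∀ u, t ≤ u → g u = 0 := by
        intro u hu
        refine le_antisymm (hc u (le_trans hSt hu)) ?_
        have := hmono (Set.mem_Ici.mpr hSt) (Set.mem_Ici.mpr (le_trans hSt hu)) hu
        linarith
      obtain ⟨t₁, ht₁, hFt₁⟩ := hFnz (t + 1) (by linarith)
      have heq : g =ᶠ[nhds t₁] fun _ => (0:ℝ) :=
        Filter.eventuallyEq_of_mem (Ioi_mem_nhds (by linarith : t < t₁))
          (fun u hu => hzero u (le_of_lt hu))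
      have h0 : HasDerivAt g 0 t₁ := (hasDerivAt_const t₁ (0:ℝ)).congr_of_eventuallyEq heq
      have := (hgder t₁ (by linarith)).unique h0
      nlinarith [Real.exp_pos (lam * t₁)]
    have hgt' : Real.exp (lam * t) * y t < 0 := hgt
    nlinarith [Real.exp_pos (lam * t)]
  · push_neg at hc
    obtain ⟨t₂, ht₂, hgt₂⟩ := hc
    refine ⟨max t₂ (S + 1), lt_of_lt_of_le (by linarith) (le_max_right _ _), Or.inl ?_⟩
    intro t ht
    have ht₂t : t₂ ≤ t := le_trans (le_max_left _ _) ht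
    have hSt : S ≤ t := le_trans ht₂ ht₂t
    have := hmono (Set.mem_Ici.mpr ht₂) (Set.mem_Ici.mpr hSt) ht₂t
    have hgt' : 0 < Real.exp (lam * t) * y t := lt_of_lt_of_le hgt₂ this
    nlinarith [Real.exp_pos (lam * t)]

/-- Mirror image of `key_pos`. -/
lemma key_neg (lam : ℝ) (y F : ℝ → ℝ) (S : ℝ)
    (hy : ContinuousOn y (Set.Ici S))
    (hder : ∀ t, S < t → HasDerivAt y (-lam * y t + F t) t)
    (hF : ∀ t, S ≤ t → F t ≤ 0)
    (hFnz : ∀ s, S ≤ s → ∃ t, s ≤ t ∧ F t < 0) :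
    ∃ S₁, S < S₁ ∧ ((∀ t, S₁ ≤ t → 0 < y t) ∨ (∀ t, S₁ ≤ t → y t < 0)) := by
  obtain ⟨S₁, hS₁, h⟩ := key_pos lam (fun t => -y t) (fun t => -F t) S hy.neg
    (fun t ht => by
      have := (hder t ht).neg
      exact this.congr_deriv (by ring))
    (fun t ht => by simpa using hF t ht)
    (fun s hs => by
      obtain ⟨t, ht, hFt⟩ := hFnz s hs
      exact ⟨t, ht, by simpa using hFt⟩)
  refine ⟨S₁, hS₁, ?_⟩
  rcases h with h | h
  · exact Or.inr fun t ht => by have := h t ht; simp at this; linarith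
  · exact Or.inl fun t ht => by have := h t ht; simp at this; linarith

lemma pos_of_mul_pos' (y v : ℝ) (h : 0 < y * v) (hy : 0 < y) : 0 < v := by nlinarith
lemma neg_of_mul_pos' (y v : ℝ) (h : 0 < y * v) (hy : y < 0) : v < 0 := by nlinarith
lemma pos_of_mul_neg' (y v : ℝ) (h : y * v < 0) (hy : y < 0) : 0 < v := by nlinarith
lemma neg_of_mul_neg' (y v : ℝ) (h : y * v < 0) (hy : 0 < y) : v < 0 := by nlinarith


/-- Lemma 7: if one component of a solution of the cyclic system is eventually of
one sign (and not eventually identically zero), then eventually all components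
are nonzero, i.e. all components are non-oscillatory with strict sign. -/
theorem nonoscillatory_component_propagates
    (n : ℕ) (hn : 0 < n) (lam : ℕ → ℝ) (hlam : ∀ j < n, 0 < lam j)
    (τ : ℝ) (hτ : 0 < τ) (f : ℕ → ℝ → ℝ) (hf : ∀ j < n, Continuous (f j))
    (hpos : ∀ j < n - 1, ∀ y : ℝ, y ≠ 0 → 0 < y * f j y)
    (hneg : ∀ y : ℝ, y ≠ 0 → y * f (n - 1) y < 0)
    (x : ℕ → ℝ → ℝ) (hx : IsCyclicSolution n lam τ f 0 x)
    (k : ℕ) (hk : k < n) (T : ℝ) (hT : 0 ≤ T)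
    (hsign : (∀ t : ℝ, T ≤ t → 0 ≤ x k t) ∨ (∀ t : ℝ, T ≤ t → x k t ≤ 0))
    (hnz : ∀ s : ℝ, T ≤ s → ∃ t : ℝ, s ≤ t ∧ x k t ≠ 0) :
    ∃ T₁ : ℝ, T < T₁ ∧ ∀ j < n, ∀ t : ℝ, T₁ ≤ t → 0 < |x j t| := by
  obtain ⟨hx0c, hxc, hxd⟩ := hx
  have hf0pos : ∀ j, j < n - 1 → f j 0 = 0 := fun j hj =>
    feedback_zero (f j) (hf j (by omega)) (hpos j hj)
  have hf0neg : f (n - 1) 0 = 0 := by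
    have := feedback_zero (fun y => -(f (n - 1) y)) (hf (n - 1) (by omega)).neg
      (fun y hy => by show 0 < y * -f (n - 1) y; nlinarith [hneg y hy])
    simpa using this
  -- the propagation step along a positive-feedback link
  have step : ∀ j, j + 1 < n →
      (∃ S, T < S ∧ ((∀ t, S ≤ t → 0 < x (j + 1) t) ∨ (∀ t, S ≤ t → x (j + 1) t < 0))) →
      ∃ S, T < S ∧ ((∀ t, S ≤ t → 0 < x j t) ∨ (∀ t, S ≤ t → x j t < 0)) := by
    rintro j hj ⟨S, hS, hsgn⟩
    have hST : (0:ℝ) ≤ S := by linarith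
    have hyc : ContinuousOn (x j) (Set.Ici S) :=
      (hxc j (by omega)).mono (Set.Ici_subset_Ici.mpr hST)
    have hder : ∀ t, S < t → HasDerivAt (x j) (-lam j * x j t + f j (x (j + 1) t)) t :=
      fun t ht => (hxd t (by linarith)).1 j hj
    rcases hsgn with hp | hp
    · obtain ⟨S₁, h1, h2⟩ := key_pos (lam j) (x j) (fun t => f j (x (j + 1) t)) S hyc hder
        (fun t ht => le_of_lt (pos_of_mul_pos' _ _
          (hpos j (by omega) _ (ne_of_gt (hp t ht))) (hp t ht)))
        (fun s hs => ⟨s, le_refl s, pos_of_mul_pos' _ _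
          (hpos j (by omega) _ (ne_of_gt (hp s hs))) (hp s hs)⟩)
      exact ⟨S₁, by linarith, h2⟩
    · obtain ⟨S₁, h1, h2⟩ := key_neg (lam j) (x j) (fun t => f j (x (j + 1) t)) S hyc hder
        (fun t ht => le_of_lt (neg_of_mul_pos' _ _
          (hpos j (by omega) _ (ne_of_lt (hp t ht))) (hp t ht)))
        (fun s hs => ⟨s, le_refl s, neg_of_mul_pos' _ _
          (hpos j (by omega) _ (ne_of_lt (hp s hs))) (hp s hs)⟩)
      exact ⟨S₁, by linarith, h2⟩
  -- the propagation step along the delayed negative-feedback link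
  have delay :
      (∃ S, T < S ∧ ((∀ t, S ≤ t → 0 < x 0 t) ∨ (∀ t, S ≤ t → x 0 t < 0))) →
      ∃ S, T < S ∧ ((∀ t, S ≤ t → 0 < x (n - 1) t) ∨ (∀ t, S ≤ t → x (n - 1) t < 0)) := by
    rintro ⟨S, hS, hsgn⟩
    have hST : (0:ℝ) ≤ S + τ := by linarith
    have hyc : ContinuousOn (x (n - 1)) (Set.Ici (S + τ)) :=
      (hxc (n - 1) (by omega)).mono (Set.Ici_subset_Ici.mpr hST)
    have hder : ∀ t, S + τ < t →
        HasDerivAt (x (n - 1)) (-lam (n - 1) * x (n - 1) t + f (n - 1) (x 0 (t - τ))) t :=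
      fun t ht => (hxd t (by linarith)).2
    rcases hsgn with hp | hp
    · obtain ⟨S₁, h1, h2⟩ := key_neg (lam (n - 1)) (x (n - 1))
        (fun t => f (n - 1) (x 0 (t - τ))) (S + τ) hyc hder
        (fun t ht => le_of_lt (neg_of_mul_neg' _ _
          (hneg _ (ne_of_gt (hp (t - τ) (by linarith)))) (hp (t - τ) (by linarith))))
        (fun s hs => ⟨s, le_refl s, neg_of_mul_neg' _ _
          (hneg _ (ne_of_gt (hp (s - τ) (by linarith)))) (hp (s - τ) (by linarith))⟩)
      exact ⟨S₁, by linarith, h2⟩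
    · obtain ⟨S₁, h1, h2⟩ := key_pos (lam (n - 1)) (x (n - 1))
        (fun t => f (n - 1) (x 0 (t - τ))) (S + τ) hyc hder
        (fun t ht => le_of_lt (pos_of_mul_neg' _ _
          (hneg _ (ne_of_lt (hp (t - τ) (by linarith)))) (hp (t - τ) (by linarith))))
        (fun s hs => ⟨s, le_refl s, pos_of_mul_neg' _ _
          (hneg _ (ne_of_lt (hp (s - τ) (by linarith)))) (hp (s - τ) (by linarith))⟩)
      exact ⟨S₁, by linarith, h2⟩
  -- downward propagation
  have down : ∀ m, m < n →
      (∃ S, T < S ∧ ((∀ t, S ≤ t → 0 < x m t) ∨ (∀ t, S ≤ t → x m t < 0))) →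
      ∀ j, j ≤ m → ∃ S, T < S ∧ ((∀ t, S ≤ t → 0 < x j t) ∨ (∀ t, S ≤ t → x j t < 0)) := by
    intro m
    induction m with
    | zero =>
      intro _ h j hj
      obtain rfl : j = 0 := Nat.le_zero.mp hj
      exact h
    | succ m ih =>
      intro hm hR j hj
      rcases Nat.lt_or_ge j (m + 1) with h | h
      · exact ih (by omega) (step m (by omega) hR) j (by omega)
      · obtain rfl : j = m + 1 := by omega
        exact hR
  -- base case: establish a strict sign for the predecessor of `x k`
  have base : ∃ S, T < S ∧ ((∀ t, S ≤ t → 0 < x 0 t) ∨ (∀ t, S ≤ t → x 0 t < 0)) := by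
    rcases Nat.eq_zero_or_pos k with hk0 | hk0
    · subst hk0
      -- use the delayed equation to get a sign for x (n-1), then go down to 0
      have hbase : ∃ S, T < S ∧
          ((∀ t, S ≤ t → 0 < x (n - 1) t) ∨ (∀ t, S ≤ t → x (n - 1) t < 0)) := by
        have hST : (0:ℝ) ≤ T + τ := by linarith
        have hyc : ContinuousOn (x (n - 1)) (Set.Ici (T + τ)) :=
          (hxc (n - 1) (by omega)).mono (Set.Ici_subset_Ici.mpr hST)
        have hder : ∀ t, T + τ < t →
            HasDerivAt (x (n - 1)) (-lam (n - 1) * x (n - 1) t + f (n - 1) (x 0 (t - τ))) t :=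
          fun t ht => (hxd t (by linarith)).2
        rcases hsign with hp | hp
        · obtain ⟨S₁, h1, h2⟩ := key_neg (lam (n - 1)) (x (n - 1))
            (fun t => f (n - 1) (x 0 (t - τ))) (T + τ) hyc hder
            (fun t ht => by
              show f (n - 1) (x 0 (t - τ)) ≤ 0
              rcases eq_or_lt_of_le (hp (t - τ) (by linarith)) with h | h
              · rw [← h, hf0neg]
              · exact le_of_lt (neg_of_mul_neg' _ _ (hneg _ (ne_of_gt h)) h))
            (fun s hs => by
              obtain ⟨t', ht', hne⟩ := hnz (s - τ) (by linarith)
              have hy : 0 < x 0 t' :=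
                lt_of_le_of_ne (hp t' (by linarith)) (Ne.symm hne)
              refine ⟨t' + τ, by linarith, ?_⟩
              have hrw : t' + τ - τ = t' := by ring
              simp only [hrw]
              exact neg_of_mul_neg' _ _ (hneg _ (ne_of_gt hy)) hy)
          exact ⟨S₁, by linarith, h2⟩
        · obtain ⟨S₁, h1, h2⟩ := key_pos (lam (n - 1)) (x (n - 1))
            (fun t => f (n - 1) (x 0 (t - τ))) (T + τ) hyc hder
            (fun t ht => by
              show 0 ≤ f (n - 1) (x 0 (t - τ))
              rcases eq_or_lt_of_le (hp (t - τ) (by linarith)) with h | h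
              · rw [h, hf0neg]
              · exact le_of_lt (pos_of_mul_neg' _ _ (hneg _ (ne_of_lt h)) h))
            (fun s hs => by
              obtain ⟨t', ht', hne⟩ := hnz (s - τ) (by linarith)
              have hy : x 0 t' < 0 :=
                lt_of_le_of_ne (hp t' (by linarith)) hne
              refine ⟨t' + τ, by linarith, ?_⟩
              have hrw : t' + τ - τ = t' := by ring
              simp only [hrw]
              exact pos_of_mul_neg' _ _ (hneg _ (ne_of_lt hy)) hy)
          exact ⟨S₁, by linarith, h2⟩
      exact down (n - 1) (by omega) hbase 0 (Nat.zero_le _)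
    · -- k ≥ 1 : use the equation for x (k-1)
      have hkk : k - 1 + 1 = k := Nat.succ_pred_eq_of_pos hk0
      have hbase : ∃ S, T < S ∧
          ((∀ t, S ≤ t → 0 < x (k - 1) t) ∨ (∀ t, S ≤ t → x (k - 1) t < 0)) := by
        have hyc : ContinuousOn (x (k - 1)) (Set.Ici T) :=
          (hxc (k - 1) (by omega)).mono (Set.Ici_subset_Ici.mpr hT)
        have hder : ∀ t, T < t →
            HasDerivAt (x (k - 1)) (-lam (k - 1) * x (k - 1) t + f (k - 1) (x k t)) t := by
          intro t ht
          have hd := (hxd t (by linarith)).1 (k - 1) (by omega)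
          rw [hkk] at hd
          exact hd
        rcases hsign with hp | hp
        · obtain ⟨S₁, h1, h2⟩ := key_pos (lam (k - 1)) (x (k - 1))
            (fun t => f (k - 1) (x k t)) T hyc hder
            (fun t ht => by
              show 0 ≤ f (k - 1) (x k t)
              rcases eq_or_lt_of_le (hp t ht) with h | h
              · rw [← h, hf0pos (k - 1) (by omega)]
              · exact le_of_lt (pos_of_mul_pos' _ _
                  (hpos (k - 1) (by omega) _ (ne_of_gt h)) h))
            (fun s hs => by
              obtain ⟨t', ht', hne⟩ := hnz s hs
              have hy : 0 < x k t' := lt_of_le_of_ne (hp t' (by linarith)) (Ne.symm hne)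
              exact ⟨t', ht', pos_of_mul_pos' _ _
                (hpos (k - 1) (by omega) _ (ne_of_gt hy)) hy⟩)
          exact ⟨S₁, h1, h2⟩
        · obtain ⟨S₁, h1, h2⟩ := key_neg (lam (k - 1)) (x (k - 1))
            (fun t => f (k - 1) (x k t)) T hyc hder
            (fun t ht => by
              show f (k - 1) (x k t) ≤ 0
              rcases eq_or_lt_of_le (hp t ht) with h | h
              · rw [h, hf0pos (k - 1) (by omega)]
              · exact le_of_lt (neg_of_mul_pos' _ _
                  (hpos (k - 1) (by omega) _ (ne_of_lt h)) h))
            (fun s hs => by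
              obtain ⟨t', ht', hne⟩ := hnz s hs
              have hy : x k t' < 0 := lt_of_le_of_ne (hp t' (by linarith)) hne
              exact ⟨t', ht', neg_of_mul_pos' _ _
                (hpos (k - 1) (by omega) _ (ne_of_lt hy)) hy⟩)
          exact ⟨S₁, h1, h2⟩
      exact down (k - 1) (by omega) hbase 0 (Nat.zero_le _)
  -- now go around the loop and down to every index
  have hRn1 := delay base
  have hall : ∀ j, j < n →
      ∃ S, T < S ∧ ((∀ t, S ≤ t → 0 < x j t) ∨ (∀ t, S ≤ t → x j t < 0)) :=
    fun j hj => down (n - 1) (by omega) hRn1 j (by omega)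
  have hall' : ∀ j : ℕ, ∃ S, T < S ∧
      (j < n → ((∀ t, S ≤ t → 0 < x j t) ∨ (∀ t, S ≤ t → x j t < 0))) := by
    intro j
    by_cases hj : j < n
    · obtain ⟨S, h1, h2⟩ := hall j hj
      exact ⟨S, h1, fun _ => h2⟩
    · exact ⟨T + 1, by linarith, fun h => absurd h hj⟩
  choose S hS1 hS2 using hall'
  have hne : (Finset.range n).Nonempty := Finset.nonempty_range_iff.mpr hn.ne'
  refine ⟨(Finset.range n).sup' hne S, ?_, ?_⟩
  · exact lt_of_lt_of_le (hS1 0) (Finset.le_sup' S (Finset.mem_range.mpr hn))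
  · intro j hj t ht
    have hSj : S j ≤ t := le_trans (Finset.le_sup' S (Finset.mem_range.mpr hj)) ht
    rcases hS2 j hj with h | h
    · exact abs_pos.mpr (ne_of_gt (h t hSj))
    · exact abs_pos.mpr (ne_of_lt (h t hSj))
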